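/- For every positive integer n, the identity Σ_{j=1}^{n} binom(n-1, n-j) / binom(n+j, j) = 1/2 holds. -/

import Mathlib

open Finset

/-- The combinatorial identity `∑_{j=1}^{n} C(n-1, n-j) / C(n+j, j) = 1/2`. -/
theorem sum_binom_ratio_eq_half (n : ℕ) (hn : 0 < n) :
    ∑ j ∈ Finset.Icc 1 n,
        ((n - 1).choose (n - j) : ℚ) / ((n + j).choose j : ℚ) = 1 / 2 := by
  set g : ℕ → ℚ := fun i => ((n - 1).choose i : ℚ) / (2 * ((n + i).choose i : ℚ)) with hg
  have key : ∀ i : ℕ, i < n →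
      ((n - 1).choose (n - (1 + i)) : ℚ) / ((n + (1 + i)).choose (1 + i) : ℚ)
        = g i - g (i + 1) := by
    intro i hi
    have h1 : n - (1 + i) = (n - 1) - i := by omega
    have h2 : i ≤ n - 1 := by omega
    have hsym : (n - 1).choose ((n - 1) - i) = (n - 1).choose i :=
      Nat.choose_symm h2
    rw [h1, hsym]
    have hA : ((n + i + 1).choose (i + 1)) * (i + 1) = (n + i + 1) * ((n + i).choose i) :=
      (Nat.add_one_mul_choose_eq (n + i) i).symm
    have hB : (n - 1).choose (i + 1) * (i + 1) = (n - 1).choose i * ((n - 1) - i) :=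
      Nat.choose_succ_right_eq (n - 1) i
    have hd : (n - 1) - i = n - 1 - i := rfl
    have hcast : ((n - 1 - i : ℕ) : ℚ) = (n : ℚ) - 1 - i := by
      rw [Nat.cast_sub h2, Nat.cast_sub hn]
      push_cast
      ring
    have hA' : ((n + i + 1).choose (i + 1) : ℚ) * (i + 1) = (n + i + 1) * ((n + i).choose i) := by
      exact_mod_cast congrArg (Nat.cast : ℕ → ℚ) hA
    have hB' : ((n - 1).choose (i + 1) : ℚ) * (i + 1) = ((n - 1).choose i) * ((n : ℚ) - 1 - i) := by
      have := congrArg (Nat.cast : ℕ → ℚ) hB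
      push_cast at this
      rw [this, hcast]
    have hp1 : (0 : ℚ) < ((n + i).choose i : ℚ) := by
      exact_mod_cast Nat.choose_pos (by omega : i ≤ n + i)
    have hp2 : (0 : ℚ) < ((n + i + 1).choose (i + 1) : ℚ) := by
      exact_mod_cast Nat.choose_pos (by omega : i + 1 ≤ n + i + 1)
    have hsame : n + (1 + i) = n + i + 1 := by omega
    rw [hsame, show (1 + i) = i + 1 from by omega]
    simp only [hg]
    rw [show n + (i + 1) = n + i + 1 from by omega]
    have hi1 : ((i : ℚ) + 1) ≠ 0 := by positivity
    have key2 : (2 * ((n + i).choose i : ℚ) * ((n - 1).choose i : ℚ)) * ((i : ℚ) + 1)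
        = (((n + i + 1).choose (i + 1) : ℚ) * ((n - 1).choose i : ℚ)
          - ((n + i).choose i : ℚ) * ((n - 1).choose (i + 1) : ℚ)) * ((i : ℚ) + 1) := by
      linear_combination ((n + i).choose i : ℚ) * hB' - ((n - 1).choose i : ℚ) * hA'
    have key3 := mul_right_cancel₀ hi1 key2
    field_simp
    linear_combination key3
  rw [← Finset.Ico_add_one_right_eq_Icc, Finset.sum_Ico_eq_sum_range]
  simp only [Nat.add_sub_cancel, Nat.succ_sub_one]
  rw [Finset.sum_congr rfl (fun i hi => key i (Finset.mem_range.mp hi))]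
  rw [Finset.sum_range_sub' g n]
  have hz : (n - 1).choose n = 0 := Nat.choose_eq_zero_of_lt (by omega)
  simp [hg, hz, Nat.choose_zero_right]
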